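/- Let G be the Gersten group, presented by generators a, b, s, t and relators ab = ba, s a s⁻¹ = a⁻¹b², t a t⁻¹ = b. Then G is free-by-ℤ: there exists a normal subgroup N of G isomorphic to a free group of finite rank such that G/N is isomorphic to ℤ. -/

import Mathlib

/-- Generators `a, b, s, t` of the Gersten group. -/
def a16 : FreeGroup (Fin 4) := FreeGroup.of 0
def b16 : FreeGroup (Fin 4) := FreeGroup.of 1
def s16 : FreeGroup (Fin 4) := FreeGroup.of 2
def t16 : FreeGroup (Fin 4) := FreeGroup.of 3

/-- Relators `ab = ba`, `s a s⁻¹ = a⁻¹b²`, `t a t⁻¹ = b` of the Gersten group. -/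
def relsGersten : Set (FreeGroup (Fin 4)) :=
  {a16 * b16 * (b16 * a16)⁻¹, s16 * a16 * s16⁻¹ * (a16⁻¹ * b16 ^ 2)⁻¹,
    t16 * a16 * t16⁻¹ * b16⁻¹}

namespace GerstenAux

abbrev F3 := FreeGroup (Fin 3)
def c : F3 := .of 0
def sg : F3 := .of 1
def tg : F3 := .of 2
def φf : F3 →* F3 := FreeGroup.lift ![c, c ^ 2 * sg, c * tg]
def φginv : F3 →* F3 := FreeGroup.lift ![c, (c ^ 2)⁻¹ * sg, c⁻¹ * tg]

def φ : MulAut F3 :=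
  MonoidHom.toMulEquiv φf φginv
    (by ext i; fin_cases i <;> simp [φf, φginv, c, sg, tg, mul_assoc])
    (by ext i; fin_cases i <;> simp [φf, φginv, c, sg, tg, mul_assoc])

def φhom : Multiplicative ℤ →* MulAut F3 := zpowersHom _ φ

abbrev H := SemidirectProduct F3 (Multiplicative ℤ) φhom

open SemidirectProduct Multiplicative

def A : H := inr (ofAdd 1)

@[simp] lemma φf_c : φf c = c := by simp [φf, c]
@[simp] lemma φf_sg : φf sg = c ^ 2 * sg := by simp [φf, c, sg]
@[simp] lemma φf_tg : φf tg = c * tg := by simp [φf, c, tg]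
@[simp] lemma φginv_c : φginv c = c := by simp [φginv, c]
@[simp] lemma φginv_sg : φginv sg = (c ^ 2)⁻¹ * sg := by simp [φginv, sg]
@[simp] lemma φginv_tg : φginv tg = c⁻¹ * tg := by simp [φginv, tg]
@[simp] lemma φ_apply (x : F3) : φ x = φf x := rfl
@[simp] lemma φ_inv_apply (x : F3) : φ⁻¹ x = φginv x := rfl
@[simp] lemma φhom_apply_ofAdd_one (x : F3) : φhom (ofAdd 1) x = φf x := by
  simp [φhom]
@[simp] lemma φhom_apply_ofAdd_one_inv (x : F3) :
    φhom (ofAdd 1)⁻¹ x = φginv x := by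
  simp [φhom, zpow_neg]; rfl
@[simp] lemma φhom_apply_ofAdd_one_inv' (x : F3) :
    (φhom (ofAdd 1))⁻¹ x = φginv x := by
  rw [← map_inv]; exact φhom_apply_ofAdd_one_inv x
@[simp] lemma φhom_apply_ofAdd_one_symm (x : F3) :
    (φhom (ofAdd 1)).symm x = φginv x :=
  φhom_apply_ofAdd_one_inv' x

def fgen : Fin 4 → H := ![A, inl c⁻¹ * A, inl sg, inl tg]

lemma rels_check : ∀ r ∈ relsGersten, FreeGroup.lift fgen r = 1 := by
  intro r hr
  simp only [relsGersten, Set.mem_insert_iff, Set.mem_singleton_iff] at hr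
  rcases hr with rfl | rfl | rfl <;>
    · simp only [a16, b16, s16, t16, map_mul, map_inv, map_pow, FreeGroup.lift_apply_of]
      ext <;> simp [fgen, A, sq, mul_assoc]

/-- The forward homomorphism from the Gersten group to `F3 ⋊ ℤ`. -/
def Φ : PresentedGroup relsGersten →* H := PresentedGroup.toGroup rels_check

abbrev G := PresentedGroup relsGersten

def aG : G := PresentedGroup.mk relsGersten a16
def bG : G := PresentedGroup.mk relsGersten b16
def sG : G := PresentedGroup.mk relsGersten s16
def tG : G := PresentedGroup.mk relsGersten t16

lemma mk_rel_one {r : FreeGroup (Fin 4)} (hr : r ∈ relsGersten) :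
    PresentedGroup.mk relsGersten r = 1 :=
  (QuotientGroup.eq_one_iff _).2 (Subgroup.subset_normalClosure hr)

lemma rel1 : aG * bG = bG * aG := by
  have h := mk_rel_one (show a16 * b16 * (b16 * a16)⁻¹ ∈ relsGersten by
    simp [relsGersten])
  simp only [map_mul, map_inv] at h
  rw [mul_inv_eq_one] at h
  exact h

lemma rel2 : sG * aG * sG⁻¹ = aG⁻¹ * bG ^ 2 := by
  have h := mk_rel_one (show s16 * a16 * s16⁻¹ * (a16⁻¹ * b16 ^ 2)⁻¹ ∈ relsGersten by
    simp [relsGersten])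
  simp only [map_mul, map_inv, map_pow] at h
  rw [mul_inv_eq_one] at h
  exact h

lemma rel3 : tG * aG * tG⁻¹ = bG := by
  have h := mk_rel_one (show t16 * a16 * t16⁻¹ * b16⁻¹ ∈ relsGersten by
    simp [relsGersten])
  simp only [map_mul, map_inv] at h
  rw [mul_inv_eq_one] at h
  exact h

section GenericConj
variable {Γ : Type*} [Group Γ] {u v s t : Γ}

lemma conj_c (huv : u * v = v * u) : u * (u * v⁻¹) * u⁻¹ = u * v⁻¹ := by
  have hc : Commute u v := huv
  have h : Commute u (u * v⁻¹) := (Commute.refl u).mul_right hc.inv_right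
  rw [h.eq, mul_inv_cancel_right]

lemma conj_s (huv : u * v = v * u) (hs : s * u * s⁻¹ = u⁻¹ * v ^ 2) :
    u * s * u⁻¹ = (u * v⁻¹) ^ 2 * s := by
  have hc : Commute u v := huv
  have h1 : s * u = u⁻¹ * v ^ 2 * s := by rw [← hs]; group
  have h2 : (u * v⁻¹) ^ 2 = u ^ 2 * (v⁻¹) ^ 2 := (hc.inv_right).mul_pow 2
  have hv2u : v⁻¹ ^ 2 * u⁻¹ = u⁻¹ * v⁻¹ ^ 2 := ((hc.inv_inv).symm.pow_left 2).eq
  rw [mul_inv_eq_iff_eq_mul, h2, mul_assoc, h1]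
  rw [show u ^ 2 * v⁻¹ ^ 2 * (u⁻¹ * v ^ 2 * s) = u ^ 2 * ((v⁻¹ ^ 2 * u⁻¹) * (v ^ 2 * s)) from by
    group, hv2u]
  group

lemma conj_t (ht : t * u * t⁻¹ = v) : u * t * u⁻¹ = (u * v⁻¹) * t := by
  have h1 : t * u = v * t := by rw [← ht]; group
  rw [mul_inv_eq_iff_eq_mul, show u * v⁻¹ * t * u = u * v⁻¹ * (t * u) from by group, h1]
  group

end GenericConj

def f₁ : F3 →* G := FreeGroup.lift ![aG * bG⁻¹, sG, tG]
def f₂ : Multiplicative ℤ →* G := zpowersHom G aG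

@[simp] lemma f₁_c : f₁ c = aG * bG⁻¹ := by simp [f₁, c]
@[simp] lemma f₁_sg : f₁ sg = sG := by simp [f₁, sg]
@[simp] lemma f₁_tg : f₁ tg = tG := by simp [f₁, tg]

lemma key (x : F3) : f₁ (φf x) = aG * f₁ x * aG⁻¹ := by
  have : f₁.comp φf = (MulAut.conj aG).toMonoidHom.comp f₁ := by
    ext i
    fin_cases i
    · show f₁ (φf c) = (MulAut.conj aG).toMonoidHom (f₁ c)
      simp only [φf_c, f₁_c, MulEquiv.coe_toMonoidHom, MulAut.conj_apply]
      exact (conj_c rel1).symm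
    · show f₁ (φf sg) = (MulAut.conj aG).toMonoidHom (f₁ sg)
      simp only [φf_sg, f₁_sg, map_mul, map_pow, f₁_c, MulEquiv.coe_toMonoidHom,
        MulAut.conj_apply]
      exact (conj_s rel1 rel2).symm
    · show f₁ (φf tg) = (MulAut.conj aG).toMonoidHom (f₁ tg)
      simp only [φf_tg, f₁_tg, map_mul, f₁_c, MulEquiv.coe_toMonoidHom, MulAut.conj_apply]
      exact (conj_t rel3).symm
  simpa using DFunLike.congr_fun this x

lemma key_inv (x : F3) : f₁ (φginv x) = aG⁻¹ * f₁ x * aG := by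
  have h := key (φginv x)
  rw [show φf (φginv x) = x from φ.apply_symm_apply x] at h
  rw [h]; group

lemma key_zpow : ∀ (n : ℤ) (x : F3), f₁ ((φ ^ n) x) = aG ^ n * f₁ x * (aG ^ n)⁻¹ := by
  intro n
  induction n using Int.induction_on with
  | zero => intro x; simp
  | succ k ih =>
    intro x
    have h : (φ ^ ((k : ℤ) + 1)) x = (φ ^ (k : ℤ)) (φf x) := by
      rw [zpow_add, zpow_one]; rfl
    rw [h, ih (φf x), key x]
    group
  | pred k ih =>
    intro x
    have h : (φ ^ (-(k : ℤ) - 1)) x = (φ ^ (-(k : ℤ))) (φginv x) := by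
      rw [sub_eq_add_neg, zpow_add, zpow_neg_one]; rfl
    rw [h, ih (φginv x), key_inv x]
    group

lemma lift_cond : ∀ g : Multiplicative ℤ,
    f₁.comp (φhom g).toMonoidHom = (MulAut.conj (f₂ g)).toMonoidHom.comp f₁ := by
  intro g
  ext x
  have h : φhom g = φ ^ g.toAdd := rfl
  have h2 : f₂ g = aG ^ g.toAdd := rfl
  simp only [MonoidHom.comp_apply, MulEquiv.coe_toMonoidHom, MulAut.conj_apply, h, h2]
  exact key_zpow g.toAdd (FreeGroup.of x)

/-- The backward homomorphism. -/
def Ψ : H →* G := SemidirectProduct.lift f₁ f₂ lift_cond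

lemma Ψ_Φ : Ψ.comp Φ = MonoidHom.id G := by
  ext i
  fin_cases i
  · show Ψ (Φ (PresentedGroup.of 0)) = aG
    rw [show Φ (PresentedGroup.of 0) = fgen 0 from PresentedGroup.toGroup.of rels_check]
    show Ψ A = aG
    simp [A, Ψ, f₂]
  · show Ψ (Φ (PresentedGroup.of 1)) = bG
    rw [show Φ (PresentedGroup.of 1) = fgen 1 from PresentedGroup.toGroup.of rels_check]
    show Ψ (inl c⁻¹ * A) = bG
    simp only [map_mul, A, Ψ, SemidirectProduct.lift_inl, SemidirectProduct.lift_inr, map_inv,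
      f₁_c]
    show (aG * bG⁻¹)⁻¹ * aG ^ (1 : ℤ) = bG
    group
  · show Ψ (Φ (PresentedGroup.of 2)) = sG
    rw [show Φ (PresentedGroup.of 2) = fgen 2 from PresentedGroup.toGroup.of rels_check]
    show Ψ (inl sg) = sG
    simp [Ψ]
  · show Ψ (Φ (PresentedGroup.of 3)) = tG
    rw [show Φ (PresentedGroup.of 3) = fgen 3 from PresentedGroup.toGroup.of rels_check]
    show Ψ (inl tg) = tG
    simp [Ψ]

lemma Φ_of (i : Fin 4) : Φ (PresentedGroup.of i) = fgen i := PresentedGroup.toGroup.of rels_check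

lemma Φ_aG : Φ aG = A := Φ_of 0
lemma Φ_bG : Φ bG = inl c⁻¹ * A := Φ_of 1
lemma Φ_sG : Φ sG = inl sg := Φ_of 2
lemma Φ_tG : Φ tG = inl tg := Φ_of 3

lemma Φ_Ψ : Φ.comp Ψ = MonoidHom.id H := by
  apply SemidirectProduct.hom_ext
  · refine FreeGroup.ext_hom _ _ fun i => ?_
    fin_cases i
    · show Φ (Ψ (inl c)) = inl c
      rw [show Ψ (inl c) = f₁ c from SemidirectProduct.lift_inl _ _ _ _, f₁_c]
      rw [map_mul, map_inv, Φ_aG, Φ_bG]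
      ext <;> simp [A]
    · show Φ (Ψ (inl sg)) = inl sg
      rw [show Ψ (inl sg) = f₁ sg from SemidirectProduct.lift_inl _ _ _ _, f₁_sg, Φ_sG]
    · show Φ (Ψ (inl tg)) = inl tg
      rw [show Ψ (inl tg) = f₁ tg from SemidirectProduct.lift_inl _ _ _ _, f₁_tg, Φ_tG]
  · apply MonoidHom.ext_mint
    show Φ (Ψ (inr (ofAdd 1))) = inr (ofAdd 1)
    rw [show Ψ (inr (ofAdd 1)) = f₂ (ofAdd 1) from SemidirectProduct.lift_inr _ _ _ _]
    show Φ (aG ^ (1 : ℤ)) = inr (ofAdd 1)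
    rw [zpow_one, Φ_aG]; rfl

def χ : G →* Multiplicative ℤ := SemidirectProduct.rightHom.comp Φ

lemma χ_surj : Function.Surjective χ := by
  intro n
  refine ⟨Ψ (inr n), ?_⟩
  have h : Φ (Ψ (inr n)) = inr n := DFunLike.congr_fun Φ_Ψ (inr n)
  simp [χ, h]

def θ : F3 →* χ.ker := (Ψ.comp inl).codRestrict _ (fun x => by
  have h : Φ (Ψ (inl x)) = inl x := DFunLike.congr_fun Φ_Ψ (inl x)
  simp [MonoidHom.mem_ker, χ, h])

lemma ker_right {y : G} (hy : y ∈ χ.ker) : (Φ y).right = 1 := by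
  rw [MonoidHom.mem_ker] at hy
  simpa [χ] using hy

def π : χ.ker →* F3 where
  toFun y := (Φ y.1).left
  map_one' := by simp
  map_mul' y z := by
    have hy : (Φ y.1).right = 1 := ker_right y.2
    simp [hy]

lemma π_θ : π.comp θ = MonoidHom.id F3 := by
  refine FreeGroup.ext_hom _ _ fun i => ?_
  show (Φ (Ψ (inl (FreeGroup.of i)))).left = FreeGroup.of i
  have h := DFunLike.congr_fun Φ_Ψ (inl (FreeGroup.of i))
  simp only [MonoidHom.comp_apply, MonoidHom.id_apply] at h
  rw [h]
  rfl

lemma θ_π : θ.comp π = MonoidHom.id χ.ker := by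
  ext y
  show (Ψ (inl ((Φ y.1).left)) : G) = y.1
  have hy : (Φ y.1).right = 1 := ker_right y.2
  have h : (inl ((Φ y.1).left) : H) = Φ y.1 := by ext <;> simp [hy]
  rw [h]
  have h2 := DFunLike.congr_fun Ψ_Φ y.1
  simpa using h2

end GerstenAux

/-- Example 5.2 / Theorem 2.1: the Gersten group is (finite rank free)-by-ℤ: it has a
normal subgroup `N` isomorphic to a free group of finite rank with `G/N ≅ ℤ` (the latter
expressed by a surjective homomorphism onto ℤ whose kernel is exactly `N`). -/
theorem Gersten_free_by_Z :
    ∃ N : Subgroup (PresentedGroup relsGersten), N.Normal ∧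
      (∃ n : ℕ, Nonempty (N ≃* FreeGroup (Fin n))) ∧
      ∃ χ : PresentedGroup relsGersten →* Multiplicative ℤ,
        Function.Surjective χ ∧ χ.ker = N := by
  exact ⟨GerstenAux.χ.ker, MonoidHom.normal_ker _,
    ⟨3, ⟨(MonoidHom.toMulEquiv GerstenAux.θ GerstenAux.π GerstenAux.π_θ GerstenAux.θ_π).symm⟩⟩,
    GerstenAux.χ, GerstenAux.χ_surj, rfl⟩
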